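/- Let m ≥ 1 be an integer and define the kernel R(t,s) = ∫₀^{min(s,t)} ((s−u)^{m−1}(t−u)^{m−1}/((m−1)!)²) du for t,s ∈ [0,1]. Then for every integrable f : [0,1] → ℝ and every t ∈ [0,1], the composition satisfies T₀ᵐ(T₁ᵐf)(t) = ∫₀¹ R(t,s) f(s) ds; that is, R is the integral kernel of the operator T₀ᵐT₁ᵐ. -/

import Mathlib

open MeasureTheory intervalIntegral

/-- The operator `T₀ f (t) = ∫₀ᵗ f(s) ds`. -/
noncomputable def T0 (f : ℝ → ℝ) : ℝ → ℝ := fun t => ∫ s in (0:ℝ)..t, f s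

/-- The operator `T₁ f (t) = ∫ₜ¹ f(s) ds`. -/
noncomputable def T1 (f : ℝ → ℝ) : ℝ → ℝ := fun t => ∫ s in t..(1:ℝ), f s

/-- The kernel `R(t,s) = ∫₀^{min(s,t)} ((s−u)^{m−1}(t−u)^{m−1}/((m−1)!)²) du`. -/
noncomputable def Rker (m : ℕ) (t s : ℝ) : ℝ :=
  ∫ u in (0:ℝ)..(min s t),
    ((s - u) ^ (m - 1) * (t - u) ^ (m - 1)) / ((Nat.factorial (m - 1) : ℝ))^2

namespace KerAux

/-- Integrability of an indicator kernel on a product of restricted measures. -/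
lemma helper_int {a e b : ℝ} (hae : a ≤ e) (heb : e ≤ b) {S : Set (ℝ × ℝ)}
    (hS : MeasurableSet S) (K : ℝ → ℝ → ℝ) (hK : Continuous fun p : ℝ × ℝ => K p.1 p.2)
    {f : ℝ → ℝ} (hf : IntegrableOn f (Set.Icc a b)) :
    Integrable (fun p : ℝ × ℝ => Set.indicator S (fun q => K q.1 q.2 * f q.2) p)
      ((volume.restrict (Set.Ioc a e)).prod (volume.restrict (Set.Ioc a b))) := by
  have hab : a ≤ b := hae.trans heb
  haveI : IsFiniteMeasure (volume.restrict (Set.Ioc a e)) :=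
    ⟨by rw [Measure.restrict_apply_univ]; exact measure_Ioc_lt_top⟩
  haveI : IsFiniteMeasure (volume.restrict (Set.Ioc a b)) :=
    ⟨by rw [Measure.restrict_apply_univ]; exact measure_Ioc_lt_top⟩
  have hfae : AEStronglyMeasurable f (volume.restrict (Set.Ioc a b)) :=
    hf.1.mono_measure (Measure.restrict_mono Set.Ioc_subset_Icc_self le_rfl)
  set P := (volume.restrict (Set.Ioc a e)).prod (volume.restrict (Set.Ioc a b)) with hP
  have hmeas : AEStronglyMeasurable (fun q : ℝ × ℝ => K q.1 q.2 * f q.2) P :=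
    hK.aestronglyMeasurable.mul hfae.comp_snd
  have hFm : AEStronglyMeasurable
      (fun p : ℝ × ℝ => Set.indicator S (fun q => K q.1 q.2 * f q.2) p) P :=
    hmeas.indicator hS
  obtain ⟨C, hC⟩ := (isCompact_Icc.prod isCompact_Icc).exists_bound_of_continuousOn
    (s := Set.Icc a b ×ˢ Set.Icc a b) hK.continuousOn
  have hbd : Integrable (fun p : ℝ × ℝ => C * ‖f p.2‖) P := by
    have habs : AEStronglyMeasurable (fun p : ℝ × ℝ => C * ‖f p.2‖) P :=
      (hfae.norm.comp_snd).const_mul C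
    rw [integrable_prod_iff habs]
    constructor
    · filter_upwards with x
      exact ((hf.mono_set Set.Ioc_subset_Icc_self).norm).const_mul C
    · exact integrable_const (μ := volume.restrict (Set.Ioc a e))
        (∫ y in Set.Ioc a b, ‖C * ‖f y‖‖)
  refine hbd.mono' hFm ?_
  have : P = (volume.prod volume).restrict (Set.Ioc a e ×ˢ Set.Ioc a b) :=
    Measure.prod_restrict _ _
  rw [this]
  filter_upwards [ae_restrict_mem (measurableSet_Ioc.prod measurableSet_Ioc)] with p hp
  have h1 : p.1 ∈ Set.Icc a b := Set.Icc_subset_Icc le_rfl heb (Set.Ioc_subset_Icc_self hp.1)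
  have h2 : p.2 ∈ Set.Icc a b := Set.Ioc_subset_Icc_self hp.2
  calc ‖Set.indicator S (fun q => K q.1 q.2 * f q.2) p‖
      ≤ ‖K p.1 p.2 * f p.2‖ := norm_indicator_le_norm_self _ p
    _ = ‖K p.1 p.2‖ * ‖f p.2‖ := norm_mul _ _
    _ ≤ C * ‖f p.2‖ :=
        mul_le_mul_of_nonneg_right (hC (p.1, p.2) (Set.mk_mem_prod h1 h2)) (norm_nonneg _)

/-- Rewriting the inner integral `∫ s in u..b` as an indicator integral over `Ioc a b`. -/
lemma claim1 {a b u : ℝ} (hau : a < u) (hub : u ≤ b) (K : ℝ → ℝ → ℝ) (f : ℝ → ℝ) :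
    (∫ s in Set.Ioc a b,
        Set.indicator {q : ℝ × ℝ | q.1 ≤ q.2} (fun q => K q.1 q.2 * f q.2) (u, s))
      = ∫ s in u..b, K u s * f s := by
  have h : ∀ s, Set.indicator {q : ℝ × ℝ | q.1 ≤ q.2} (fun q => K q.1 q.2 * f q.2) (u, s)
      = Set.indicator (Set.Ici u) (fun s => K u s * f s) s := by
    intro s
    simp [Set.indicator_apply, Set.mem_Ici, Set.mem_setOf_eq]
  simp only [h]
  rw [MeasureTheory.setIntegral_indicator measurableSet_Ici]
  have hset : Set.Ioc a b ∩ Set.Ici u = Set.Icc u b := by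
    ext s
    simp only [Set.mem_inter_iff, Set.mem_Ioc, Set.mem_Ici, Set.mem_Icc]
    constructor
    · rintro ⟨⟨_, h2⟩, h3⟩; exact ⟨h3, h2⟩
    · rintro ⟨h3, h2⟩; exact ⟨⟨lt_of_lt_of_le hau h3, h2⟩, h3⟩
  rw [hset, MeasureTheory.integral_Icc_eq_integral_Ioc,
    ← intervalIntegral.integral_of_le hub]

/-- mirrored version for swap2 -/
lemma claim1' {a b u : ℝ} (hau : a < u) (hub : u ≤ b) (K : ℝ → ℝ → ℝ) (g : ℝ → ℝ) :
    (∫ x in Set.Ioc a b,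
        Set.indicator {q : ℝ × ℝ | q.2 ≤ q.1} (fun q => K q.1 q.2 * g q.2) (x, u))
      = ∫ x in u..b, K x u * g u := by
  have h : ∀ x, Set.indicator {q : ℝ × ℝ | q.2 ≤ q.1} (fun q => K q.1 q.2 * g q.2) (x, u)
      = Set.indicator (Set.Ici u) (fun x => K x u * g u) x := by
    intro x
    simp [Set.indicator_apply, Set.mem_Ici, Set.mem_setOf_eq]
  simp only [h]
  rw [MeasureTheory.setIntegral_indicator measurableSet_Ici]
  have hset : Set.Ioc a b ∩ Set.Ici u = Set.Icc u b := by
    ext s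
    simp only [Set.mem_inter_iff, Set.mem_Ioc, Set.mem_Ici, Set.mem_Icc]
    constructor
    · rintro ⟨⟨_, h2⟩, h3⟩; exact ⟨h3, h2⟩
    · rintro ⟨h3, h2⟩; exact ⟨⟨lt_of_lt_of_le hau h3, h2⟩, h3⟩
  rw [hset, MeasureTheory.integral_Icc_eq_integral_Ioc,
    ← intervalIntegral.integral_of_le hub]

/-- Swap lemma 1: trapezoidal region `a ≤ u ≤ t'`, `u ≤ s ≤ b`. -/
lemma swap1 {a t' b : ℝ} (hat : a ≤ t') (htb : t' ≤ b) (K : ℝ → ℝ → ℝ)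
    (hK : Continuous fun p : ℝ × ℝ => K p.1 p.2) {f : ℝ → ℝ}
    (hf : IntegrableOn f (Set.Icc a b)) :
    (∫ u in a..t', (∫ s in u..b, K u s * f s))
      = ∫ s in a..b, (∫ u in a..(min s t'), K u s) * f s := by
  have hab : a ≤ b := hat.trans htb
  have hS : MeasurableSet {q : ℝ × ℝ | q.1 ≤ q.2} :=
    measurableSet_le measurable_fst measurable_snd
  set F : ℝ × ℝ → ℝ :=
    fun p => Set.indicator {q : ℝ × ℝ | q.1 ≤ q.2} (fun q => K q.1 q.2 * f q.2) p with hF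
  have hFint : Integrable F
      ((volume.restrict (Set.Ioc a t')).prod (volume.restrict (Set.Ioc a b))) :=
    helper_int hat htb hS K hK hf
  calc (∫ u in a..t', (∫ s in u..b, K u s * f s))
      = ∫ u in Set.Ioc a t', (∫ s in u..b, K u s * f s) :=
        intervalIntegral.integral_of_le hat
    _ = ∫ u in Set.Ioc a t', ∫ s in Set.Ioc a b, F (u, s) := by
        refine MeasureTheory.setIntegral_congr_fun measurableSet_Ioc ?_
        intro u hu
        dsimp only
        exact (claim1 hu.1 (hu.2.trans htb) K f).symm
    _ = ∫ s in Set.Ioc a b, ∫ u in Set.Ioc a t', F (u, s) :=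
        MeasureTheory.integral_integral_swap (f := fun u s => F (u, s)) hFint
    _ = ∫ s in Set.Ioc a b, (∫ u in a..(min s t'), K u s) * f s := by
        refine MeasureTheory.setIntegral_congr_fun measurableSet_Ioc ?_
        intro s hs
        dsimp only
        have h : ∀ u, F (u, s) = Set.indicator (Set.Iic s) (fun u => K u s * f s) u := by
          intro u
          simp [hF, Set.indicator_apply, Set.mem_Iic, Set.mem_setOf_eq]
        simp only [h]
        rw [MeasureTheory.setIntegral_indicator measurableSet_Iic, Set.Ioc_inter_Iic,
          min_comm t' s]
        have hmin : a ≤ min s t' := le_min hs.1.le hat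
        rw [← intervalIntegral.integral_of_le hmin, intervalIntegral.integral_mul_const]
    _ = ∫ s in a..b, (∫ u in a..(min s t'), K u s) * f s :=
        (intervalIntegral.integral_of_le hab).symm

/-- Swap lemma 2: triangular region `a ≤ u ≤ x ≤ b`, other orientation. -/
lemma swap2 {a b : ℝ} (hab : a ≤ b) (K : ℝ → ℝ → ℝ)
    (hK : Continuous fun p : ℝ × ℝ => K p.1 p.2) {g : ℝ → ℝ}
    (hg : IntegrableOn g (Set.Icc a b)) :
    (∫ x in a..b, (∫ u in a..x, K x u * g u))
      = ∫ u in a..b, (∫ x in u..b, K x u) * g u := by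
  have hS : MeasurableSet {q : ℝ × ℝ | q.2 ≤ q.1} :=
    measurableSet_le measurable_snd measurable_fst
  set F : ℝ × ℝ → ℝ :=
    fun p => Set.indicator {q : ℝ × ℝ | q.2 ≤ q.1} (fun q => K q.1 q.2 * g q.2) p with hF
  have hFint : Integrable F
      ((volume.restrict (Set.Ioc a b)).prod (volume.restrict (Set.Ioc a b))) :=
    helper_int hab le_rfl hS K hK hg
  calc (∫ x in a..b, (∫ u in a..x, K x u * g u))
      = ∫ x in Set.Ioc a b, (∫ u in a..x, K x u * g u) :=
        intervalIntegral.integral_of_le hab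
    _ = ∫ x in Set.Ioc a b, ∫ u in Set.Ioc a b, F (x, u) := by
        refine MeasureTheory.setIntegral_congr_fun measurableSet_Ioc ?_
        intro x hx
        dsimp only
        have h : ∀ u, F (x, u) = Set.indicator (Set.Iic x) (fun u => K x u * g u) u := by
          intro u
          simp [hF, Set.indicator_apply, Set.mem_Iic, Set.mem_setOf_eq]
        simp only [h]
        rw [MeasureTheory.setIntegral_indicator measurableSet_Iic, Set.Ioc_inter_Iic,
          min_eq_right hx.2, ← intervalIntegral.integral_of_le hx.1.le]
    _ = ∫ u in Set.Ioc a b, ∫ x in Set.Ioc a b, F (x, u) :=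
        MeasureTheory.integral_integral_swap (f := fun x u => F (x, u)) hFint
    _ = ∫ u in Set.Ioc a b, (∫ x in u..b, K x u) * g u := by
        refine MeasureTheory.setIntegral_congr_fun measurableSet_Ioc ?_
        intro u hu
        dsimp only
        simp only [hF]
        rw [claim1' hu.1 hu.2 K g, intervalIntegral.integral_mul_const]
    _ = ∫ u in a..b, (∫ x in u..b, K x u) * g u :=
        (intervalIntegral.integral_of_le hab).symm

/-- Integrability of `u ↦ ∫ s in u..b, K u s * f s` on `[a,b]`. -/
lemma integrable_rep {a b : ℝ} (hab : a ≤ b) (K : ℝ → ℝ → ℝ)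
    (hK : Continuous fun p : ℝ × ℝ => K p.1 p.2) {f : ℝ → ℝ}
    (hf : IntegrableOn f (Set.Icc a b)) :
    IntegrableOn (fun u => ∫ s in u..b, K u s * f s) (Set.Icc a b) := by
  rw [integrableOn_Icc_iff_integrableOn_Ioc]
  have hS : MeasurableSet {q : ℝ × ℝ | q.1 ≤ q.2} :=
    measurableSet_le measurable_fst measurable_snd
  have hFint := helper_int hab le_rfl hS K hK hf
  have h2 : Integrable
      (fun u => ∫ s in Set.Ioc a b,
        Set.indicator {q : ℝ × ℝ | q.1 ≤ q.2} (fun q => K q.1 q.2 * f q.2) (u, s))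
      (volume.restrict (Set.Ioc a b)) :=
    hFint.integral_prod_left
  refine h2.congr ?_
  filter_upwards [ae_restrict_mem measurableSet_Ioc] with u hu
  exact claim1 hu.1 hu.2 K f

/-- Cauchy formula for the iterated `T0`. -/
lemma cauchyT0 (n : ℕ) (g : ℝ → ℝ) (hg : IntegrableOn g (Set.Icc 0 1)) :
    ∀ t ∈ Set.Icc (0:ℝ) 1,
      T0^[n + 1] g t = ∫ u in (0:ℝ)..t, (t - u) ^ n / (Nat.factorial n : ℝ) * g u := by
  induction n with
  | zero =>
    intro t _
    simp [T0]
  | succ n ih =>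
    intro t ht
    rw [Function.iterate_succ_apply']
    show (∫ x in (0:ℝ)..t, T0^[n + 1] g x) = _
    have hcongr : Set.EqOn (T0^[n + 1] g)
        (fun x => ∫ u in (0:ℝ)..x, (x - u) ^ n / (Nat.factorial n : ℝ) * g u)
        (Set.uIcc 0 t) := by
      intro x hx
      rw [Set.uIcc_of_le ht.1] at hx
      exact ih x (Set.Icc_subset_Icc le_rfl ht.2 hx)
    rw [intervalIntegral.integral_congr hcongr]
    have hK : Continuous fun p : ℝ × ℝ => (p.1 - p.2) ^ n / (Nat.factorial n : ℝ) := by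
      fun_prop
    rw [swap2 ht.1 (fun x u => (x - u) ^ n / (Nat.factorial n : ℝ)) hK
      (hg.mono_set (Set.Icc_subset_Icc le_rfl ht.2))]
    refine intervalIntegral.integral_congr ?_
    intro u _
    dsimp only
    congr 1
    have hdiv : (∫ x in u..t, (x - u) ^ n / (Nat.factorial n : ℝ))
        = (∫ x in u..t, (x - u) ^ n) / (Nat.factorial n : ℝ) :=
      intervalIntegral.integral_div _ _
    rw [hdiv, intervalIntegral.integral_comp_sub_right (fun x => x ^ n) u, sub_self,
      integral_pow]
    rw [Nat.factorial_succ]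
    push_cast
    have h1 : (0:ℝ) ^ (n + 1) = 0 := zero_pow (by omega)
    rw [h1]
    have hfac : (Nat.factorial n : ℝ) ≠ 0 := Nat.cast_ne_zero.mpr n.factorial_ne_zero
    have hn1 : ((n:ℝ) + 1) ≠ 0 := by positivity
    field_simp
    rw [sub_zero]

/-- Cauchy formula for the iterated `T1`. -/
lemma cauchyT1 (n : ℕ) (f : ℝ → ℝ) (hf : IntegrableOn f (Set.Icc 0 1)) :
    ∀ t ∈ Set.Icc (0:ℝ) 1,
      T1^[n + 1] f t = ∫ s in t..(1:ℝ), (s - t) ^ n / (Nat.factorial n : ℝ) * f s := by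
  induction n with
  | zero =>
    intro t _
    simp [T1]
  | succ n ih =>
    intro t ht
    rw [Function.iterate_succ_apply']
    show (∫ x in t..(1:ℝ), T1^[n + 1] f x) = _
    have hcongr : Set.EqOn (T1^[n + 1] f)
        (fun x => ∫ s in x..(1:ℝ), (s - x) ^ n / (Nat.factorial n : ℝ) * f s)
        (Set.uIcc t 1) := by
      intro x hx
      rw [Set.uIcc_of_le ht.2] at hx
      exact ih x (Set.Icc_subset_Icc ht.1 le_rfl hx)
    rw [intervalIntegral.integral_congr hcongr]
    have hK : Continuous fun p : ℝ × ℝ => (p.2 - p.1) ^ n / (Nat.factorial n : ℝ) := by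
      fun_prop
    rw [swap1 ht.2 le_rfl (fun u s => (s - u) ^ n / (Nat.factorial n : ℝ)) hK
      (hf.mono_set (Set.Icc_subset_Icc ht.1 le_rfl))]
    refine intervalIntegral.integral_congr ?_
    intro s hs
    rw [Set.uIcc_of_le ht.2] at hs
    dsimp only
    congr 1
    rw [min_eq_left hs.2]
    have hdiv : (∫ u in t..s, (s - u) ^ n / (Nat.factorial n : ℝ))
        = (∫ u in t..s, (s - u) ^ n) / (Nat.factorial n : ℝ) :=
      intervalIntegral.integral_div _ _
    rw [hdiv, intervalIntegral.integral_comp_sub_left (fun x => x ^ n) s, sub_self,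
      integral_pow]
    rw [Nat.factorial_succ]
    push_cast
    have h1 : (0:ℝ) ^ (n + 1) = 0 := zero_pow (by omega)
    rw [h1]
    have hfac : (Nat.factorial n : ℝ) ≠ 0 := Nat.cast_ne_zero.mpr n.factorial_ne_zero
    have hn1 : ((n:ℝ) + 1) ≠ 0 := by positivity
    field_simp
    rw [sub_zero]

end KerAux

/-- For `m ≥ 1` and integrable `f : [0,1] → ℝ`, the composition `T₀ᵐ T₁ᵐ` has integral
kernel `R`: for every `t ∈ [0,1]`, `T₀ᵐ (T₁ᵐ f) (t) = ∫₀¹ R(t,s) f(s) ds`. -/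
theorem T0m_T1m_integral_kernel (m : ℕ) (hm : 1 ≤ m) (f : ℝ → ℝ)
    (hf : IntegrableOn f (Set.Icc (0:ℝ) 1)) :
    ∀ t ∈ Set.Icc (0:ℝ) 1,
      T0^[m] (T1^[m] f) t = ∫ s in (0:ℝ)..1, Rker m t s * f s := by
  obtain ⟨n, rfl⟩ : ∃ n, m = n + 1 := ⟨m - 1, (Nat.succ_pred_eq_of_pos hm).symm⟩
  intro t ht
  set c : ℝ := (Nat.factorial n : ℝ) with hc
  have hcne : c ≠ 0 := Nat.cast_ne_zero.mpr n.factorial_ne_zero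
  have hrepK : Continuous fun p : ℝ × ℝ => (p.2 - p.1) ^ n / c := by fun_prop
  have hg_int : IntegrableOn (T1^[n + 1] f) (Set.Icc 0 1) := by
    refine (KerAux.integrable_rep zero_le_one (fun u s => (s - u) ^ n / c) hrepK hf).congr_fun
      ?_ measurableSet_Icc
    intro x hx
    exact (KerAux.cauchyT1 n f hf x hx).symm
  have h1 := KerAux.cauchyT0 n (T1^[n + 1] f) hg_int t ht
  rw [h1]
  have hK : Continuous fun p : ℝ × ℝ => (t - p.1) ^ n / c * ((p.2 - p.1) ^ n / c) := by
    fun_prop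
  have h2 : (∫ u in (0:ℝ)..t, (t - u) ^ n / c * (T1^[n + 1] f) u)
      = ∫ u in (0:ℝ)..t, (∫ s in u..(1:ℝ),
          ((t - u) ^ n / c * ((s - u) ^ n / c)) * f s) := by
    refine intervalIntegral.integral_congr ?_
    intro u hu
    rw [Set.uIcc_of_le ht.1] at hu
    have hu01 : u ∈ Set.Icc (0:ℝ) 1 := Set.Icc_subset_Icc le_rfl ht.2 hu
    dsimp only
    rw [KerAux.cauchyT1 n f hf u hu01, ← intervalIntegral.integral_const_mul]
    refine intervalIntegral.integral_congr fun s _ => ?_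
    ring
  rw [h2, KerAux.swap1 ht.1 ht.2 (fun u s => (t - u) ^ n / c * ((s - u) ^ n / c)) hK hf]
  refine intervalIntegral.integral_congr fun s _ => ?_
  congr 1
  unfold Rker
  simp only [Nat.add_sub_cancel]
  refine intervalIntegral.integral_congr fun u _ => ?_
  rw [← hc]
  field_simp
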